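/- arXiv:2303.06584 — 2 statements merged into one kernel-verified Lean document; each statement's English description precedes it below -/
import Mathlib

section
/- The Gauss quadrature weights satisfy w_i · Σ_{k=0}^{n-1} π_k(x_i)² = 1 for each node x_i, where π_k are the orthonormal polynomials. -/
open Polynomial intervalIntegral

/-- Any polynomial of degree `< m` is a linear combination of `π 0, …, π (m-1)`
when `π k` has exact degree `k` and is nonzero. -/
lemma span_aux (π : ℕ → Polynomial ℝ) (hdeg : ∀ k, (π k).natDegree = k)
    (hne : ∀ k, π k ≠ 0) :
    ∀ m (q : Polynomial ℝ), q.degree < (m : ℕ) →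
      ∃ c : ℕ → ℝ, q = ∑ k ∈ Finset.range m, Polynomial.C (c k) * π k := by
  intro m
  induction m with
  | zero =>
    intro q hq
    refine ⟨fun _ => 0, ?_⟩
    simp only [Finset.range_zero, Finset.sum_empty]
    have : q.degree = ⊥ := by
      exact Nat.WithBot.lt_zero_iff.mp (by exact_mod_cast hq)
    exact Polynomial.degree_eq_bot.mp this
  | succ m ih =>
    intro q hq
    set d : ℝ := q.coeff m / (π m).coeff m with hd
    have hlc : (π m).coeff m ≠ 0 := by
      have := Polynomial.leadingCoeff_ne_zero.mpr (hne m)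
      rwa [Polynomial.leadingCoeff, hdeg m] at this
    set r : Polynomial ℝ := q - Polynomial.C d * π m with hr
    have hrdeg : r.degree < (m : ℕ) := by
      rw [Polynomial.degree_lt_iff_coeff_zero]
      intro j hj
      have hj' : (m : ℕ) ≤ j := by exact_mod_cast hj
      rcases eq_or_lt_of_le hj' with h | h
      · subst h
        simp only [hr, Polynomial.coeff_sub, Polynomial.coeff_C_mul, hd]
        field_simp
        ring
      · have h1 : q.coeff j = 0 := by
          apply Polynomial.coeff_eq_zero_of_degree_lt
          exact lt_of_lt_of_le hq (by exact_mod_cast Nat.succ_le_of_lt h)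
        have h2 : (π m).coeff j = 0 := by
          apply Polynomial.coeff_eq_zero_of_natDegree_lt
          rw [hdeg m]; exact h
        simp [hr, h1, h2]
    obtain ⟨c, hc⟩ := ih r hrdeg
    refine ⟨fun k => if k = m then d else c k, ?_⟩
    rw [Finset.sum_range_succ]
    have : ∑ k ∈ Finset.range m,
        Polynomial.C (if k = m then d else c k) * π k
        = ∑ k ∈ Finset.range m, Polynomial.C (c k) * π k := by
      apply Finset.sum_congr rfl
      intro k hk
      rw [if_neg (Finset.mem_range.mp hk).ne]
    rw [this]
    simp only [eq_self_iff_true, if_true]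
    rw [← hc, hr]
    ring

/-- The Gauss quadrature weights satisfy `w_i · Σ_{k=0}^{n-1} π_k(x_i)² = 1`, where the
`π_k` are the orthonormal polynomials for the positive weight `w` on `[a,b]`, the nodes
`x i` are the zeros of `π n`, and the rule is exact for polynomials of degree ≤ 2n-1. -/
theorem gauss_weights_christoffel_darboux
    (a b : ℝ) (hab : a < b) (w : ℝ → ℝ)
    (hw : Continuous w) (hwpos : ∀ x ∈ Set.Icc a b, 0 < w x)
    (π : ℕ → Polynomial ℝ)
    (hdeg : ∀ k, (π k).natDegree = k)
    (horthonormal : ∀ j k, (∫ t in a..b, w t * (π j).eval t * (π k).eval t) =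
      if j = k then 1 else 0)
    (n : ℕ) (hn : 1 ≤ n)
    (x : Fin n → ℝ) (hroots : ∀ i, (π n).IsRoot (x i))
    (hinj : Function.Injective x)
    (W : Fin n → ℝ)
    (hexact : ∀ f : Polynomial ℝ, f.natDegree ≤ 2 * n - 1 →
      (∫ t in a..b, w t * f.eval t) = ∑ i : Fin n, W i * f.eval (x i)) :
    ∀ i : Fin n, W i * ∑ k ∈ Finset.range n, ((π k).eval (x i)) ^ 2 = 1 := by
  intro i
  have hne : ∀ k, π k ≠ 0 := by
    intro k h
    have := horthonormal k k
    simp [h] at this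
  have hinjOn : Set.InjOn x ↑(Finset.univ : Finset (Fin n)) := hinj.injOn
  set L : Polynomial ℝ := Lagrange.basis Finset.univ x i with hL
  have hLdeg : L.natDegree = n - 1 := by
    rw [hL, Lagrange.natDegree_basis hinjOn (Finset.mem_univ i)]
    simp
  have hLself : L.eval (x i) = 1 :=
    Lagrange.eval_basis_self hinjOn (Finset.mem_univ i)
  have hLother : ∀ j : Fin n, j ≠ i → L.eval (x j) = 0 := by
    intro j hj
    exact Lagrange.eval_basis_of_ne hj.symm (Finset.mem_univ j)
  -- expand L in the orthonormal basis
  have hLdeg' : L.degree < (n : ℕ) := by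
    apply lt_of_le_of_lt Polynomial.degree_le_natDegree
    exact_mod_cast lt_of_le_of_lt (le_of_eq hLdeg) (by omega)
  obtain ⟨c, hc⟩ := span_aux π hdeg hne n L hLdeg'
  have hLeval : ∀ t, L.eval t = ∑ m ∈ Finset.range n, c m * (π m).eval t := by
    intro t
    rw [hc]
    simp [Polynomial.eval_finset_sum]
  -- integrability facts
  have hint : ∀ k m : ℕ, IntervalIntegrable
      (fun t => c m * (w t * (π k).eval t * (π m).eval t)) MeasureTheory.volume a b := by
    intro k m
    exact (continuous_const.mul ((hw.mul (π k).continuous).mul (π m).continuous)).intervalIntegrable a b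
  -- key: c k = W i * π k (x i) for k < n
  have hkey : ∀ k ∈ Finset.range n, c k = W i * (π k).eval (x i) := by
    intro k hk
    have hk' : k < n := Finset.mem_range.mp hk
    have hdegprod : (π k * L).natDegree ≤ 2 * n - 1 := by
      calc (π k * L).natDegree ≤ (π k).natDegree + L.natDegree := Polynomial.natDegree_mul_le
        _ = k + (n - 1) := by rw [hdeg, hLdeg]
        _ ≤ 2 * n - 1 := by omega
    have hq := hexact (π k * L) hdegprod
    -- right side of quadrature
    have hrs : ∑ j : Fin n, W j * (π k * L).eval (x j) = W i * (π k).eval (x i) := by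
      rw [Finset.sum_eq_single i]
      · simp [Polynomial.eval_mul, hLself]
      · intro j _ hj
        simp [Polynomial.eval_mul, hLother j hj]
      · simp
    -- left side via orthonormality
    have hls : (∫ t in a..b, w t * (π k * L).eval t) = c k := by
      have h1 : ∀ t, w t * (π k * L).eval t
          = ∑ m ∈ Finset.range n, c m * (w t * (π k).eval t * (π m).eval t) := by
        intro t
        rw [Polynomial.eval_mul, hLeval t, Finset.mul_sum, Finset.mul_sum]
        apply Finset.sum_congr rfl
        intro m _
        ring
      rw [intervalIntegral.integral_congr (fun t _ => h1 t)]
      rw [intervalIntegral.integral_finset_sum (fun m _ => hint k m)]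
      have h2 : ∀ m ∈ Finset.range n,
          (∫ t in a..b, c m * (w t * (π k).eval t * (π m).eval t))
          = c m * (if k = m then 1 else 0) := by
        intro m _
        rw [intervalIntegral.integral_const_mul, horthonormal k m]
      rw [Finset.sum_congr rfl h2]
      simp [Finset.sum_ite_eq, hk']
    rw [hls, hrs] at hq
    exact hq
  -- conclude
  have h1 : (1 : ℝ) = ∑ k ∈ Finset.range n, c k * (π k).eval (x i) := by
    rw [← hLself, hLeval]
  rw [Finset.sum_congr rfl (fun k hk => by rw [hkey k hk])] at h1
  rw [Finset.mul_sum]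
  rw [h1]
  apply Finset.sum_congr rfl
  intro k _
  ring
end

section
/- If v = (π_0(x_i), π_1(x_i), …, π_{n-1}(x_i))ᵀ is the eigenvector of the Jacobi matrix M for eigenvalue x_i, normalized to unit Euclidean norm with first component q_0^{(i)}, then the Gauss quadrature weight satisfies w_i = (q_0^{(i)})² · ∫_a^b w(x) dx. -/
open Polynomial intervalIntegral

/-- If `v = (π_0(x_i), …, π_{n-1}(x_i))` is the Jacobi-matrix eigenvector for the
eigenvalue `x_i`, normalized to unit Euclidean norm with first component `q₀`, then the
Gauss quadrature weight satisfies `w_i = q₀² ∫_a^b w`. Here `π_0 = 1/√(∫_a^b w)` and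
`w_i` is defined by `w_i Σ_{k<n} π_k(x_i)² = 1`. -/
theorem gauss_weight_eq_first_component_sq_mul_integral
    (a b : ℝ) (hab : a < b) (w : ℝ → ℝ)
    (hwint : 0 < ∫ t in a..b, w t)
    (π : ℕ → Polynomial ℝ)
    (hπ0 : π 0 = C (1 / Real.sqrt (∫ t in a..b, w t)))
    (n : ℕ) (hn : 1 ≤ n) (xi : ℝ)
    (hroot : (π n).IsRoot xi)
    (v : Fin n → ℝ) (hv : ∀ k : Fin n, v k = (π (k : ℕ)).eval xi)
    (q : Fin n → ℝ) (hq : q = (‖(EuclideanSpace.equiv (Fin n) ℝ).symm v‖)⁻¹ • v)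
    (Wi : ℝ)
    (hWi : Wi * ∑ k ∈ Finset.range n, ((π k).eval xi) ^ 2 = 1) :
    Wi = (q ⟨0, hn⟩) ^ 2 * ∫ t in a..b, w t := by
  set I := ∫ t in a..b, w t with hI
  set S := ∑ k ∈ Finset.range n, ((π k).eval xi) ^ 2 with hS
  have hS0 : 0 ≤ S := Finset.sum_nonneg fun k _ => sq_nonneg _
  have hSne : S ≠ 0 := by
    intro h; rw [h, mul_zero] at hWi; exact one_ne_zero hWi.symm
  have hSpos : 0 < S := lt_of_le_of_ne hS0 (Ne.symm hSne)
  -- norm of v squared equals S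
  have hnorm : ‖(EuclideanSpace.equiv (Fin n) ℝ).symm v‖ = Real.sqrt S := by
    rw [EuclideanSpace.norm_eq]
    congr 1
    rw [hS, ← Fin.sum_univ_eq_sum_range]
    apply Finset.sum_congr rfl
    intro k _
    rw [show ((EuclideanSpace.equiv (Fin n) ℝ).symm v) k = v k from rfl, hv k,
      Real.norm_eq_abs, sq_abs]
  have hv0 : v ⟨0, hn⟩ = 1 / Real.sqrt I := by
    rw [hv, hπ0]; simp
  have hq0 : q ⟨0, hn⟩ = (Real.sqrt S)⁻¹ * (1 / Real.sqrt I) := by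
    rw [hq, Pi.smul_apply, smul_eq_mul, hnorm, hv0]
  have hIs : Real.sqrt I ^ 2 = I := Real.sq_sqrt hwint.le
  have hSs : Real.sqrt S ^ 2 = S := Real.sq_sqrt hSpos.le
  have hIne : Real.sqrt I ≠ 0 := by positivity
  have hSne' : Real.sqrt S ≠ 0 := by positivity
  rw [hq0]
  field_simp
  rw [hSs, hIs, hWi, one_mul]
end
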